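/- If the matrix A is invertible (rank two), then as k → ∞ the following limits hold: u_{2k}/v_{2k-2} → C_1 λ_1 / C_3, u_{2k}/v_{2k} → C_1/C_3, v_{2k}/u_{2k-2} → C_3 λ_1 / C_1, and v_{2k}/u_{2k} → C_3/C_1. -/

import Mathlib

open Finset Filter Topology

private lemma aux_div_div (L A B : ℝ) (hL : L ≠ 0) : (A / L) / (B / L) = A / B := by
  rcases eq_or_ne B 0 with hB | hB
  · simp [hB]
  · field_simp

theorem key_aux (p q r s x0 y0 D lam1 lam2 C1 C3 : ℝ)
    (hp : 0 < p) (hq : 0 < q) (hr : 0 < r) (hs : 0 < s)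
    (hx0 : 0 < x0) (hy0 : 0 < y0)
    (hD : D = Real.sqrt ((p - s) ^ 2 + 4 * q * r))
    (hlam1 : lam1 = (p + s + D) / 2) (hlam2 : lam2 = (p + s - D) / 2)
    (hC1 : C1 = q / (lam1 - lam2) * (r / (lam1 - p) * x0 + y0))
    (hC3 : C3 = (r * x0 + (lam1 - p) * y0) / (lam1 - lam2))
    (u v : ℕ → ℝ) (hu0 : u 0 = x0) (hv0 : v 0 = y0)
    (hustep : ∀ k, u (k + 1) = p * u k + q * v k)
    (hvstep : ∀ k, v (k + 1) = r * u k + s * v k) :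
    Tendsto (fun k => u k / v (k - 1)) atTop (nhds (C1 * lam1 / C3)) ∧
    Tendsto (fun k => u k / v k) atTop (nhds (C1 / C3)) ∧
    Tendsto (fun k => v k / u (k - 1)) atTop (nhds (C3 * lam1 / C1)) ∧
    Tendsto (fun k => v k / u k) atTop (nhds (C3 / C1)) := by
  have hDpos : 0 < D := by
    rw [hD]
    apply Real.sqrt_pos.mpr
    nlinarith [sq_nonneg (p - s), mul_pos hq hr]
  have hD2 : D ^ 2 = (p - s) ^ 2 + 4 * q * r := by
    rw [hD, Real.sq_sqrt]
    nlinarith [sq_nonneg (p - s), mul_pos hq hr]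
  have hsum : lam1 + lam2 = p + s := by rw [hlam1, hlam2]; ring
  have hdiff : lam1 - lam2 = D := by rw [hlam1, hlam2]; ring
  have hprod : lam1 * lam2 = p * s - q * r := by
    rw [hlam1, hlam2]; linear_combination (-(1:ℝ)/4) * hD2
  have hl1p : 0 < lam1 - p := by
    rw [hlam1]
    nlinarith [hDpos, hD2, mul_pos hq hr, sq_nonneg (D - (p - s)), sq_nonneg (D + (p - s))]
  have hl1pos : 0 < lam1 := by rw [hlam1]; linarith
  have hDne : D ≠ 0 := hDpos.ne'
  have hl1pne : (lam1 - p) ≠ 0 := hl1p.ne'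
  have hl1ne : lam1 ≠ 0 := hl1pos.ne'
  -- cleared forms of C1, C3
  have hC1' : C1 * ((lam1 - lam2) * (lam1 - p)) = q * (r * x0 + (lam1 - p) * y0) := by
    rw [hC1, hdiff]; field_simp
  have hC3' : C3 * (lam1 - lam2) = r * x0 + (lam1 - p) * y0 := by
    rw [hC3, hdiff]; field_simp
  have hC1pos : 0 < C1 := by
    rw [hC1, hdiff]
    exact mul_pos (div_pos hq hDpos) (add_pos (mul_pos (div_pos hr hl1p) hx0) hy0)
  have hC3pos : 0 < C3 := by
    rw [hC3, hdiff]
    exact div_pos (add_pos (mul_pos hr hx0) (mul_pos hl1p hy0)) hDpos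
  have hkey : C1 * (lam1 - p) = q * C3 := by
    have h2 : C1 * (lam1 - p) * D = q * C3 * D := by
      rw [← hdiff]
      linear_combination hC1' - q * hC3'
    exact mul_right_cancel₀ hDne h2
  have hchar : (lam1 - p) * (lam1 - s) = q * r := by
    linear_combination lam1 * hsum - hprod
  have hchar2 : (lam1 - p) * (p - lam2) = q * r := by
    linear_combination p * hsum - hprod
  have E1 : p * C1 + q * C3 = lam1 * C1 := by linear_combination -hkey
  have E2 : r * C1 + s * C3 = lam1 * C3 := by
    have h2 : (r * C1 + s * C3) * (lam1 - p) = (lam1 * C3) * (lam1 - p) := by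
      linear_combination r * hkey - C3 * hchar
    exact mul_right_cancel₀ hl1pne h2
  have hu1 : p * x0 + q * y0 = C1 * lam1 + (x0 - C1) * lam2 := by
    have h2 : (p * x0 + q * y0) * (lam1 - p) = (C1 * lam1 + (x0 - C1) * lam2) * (lam1 - p) := by
      linear_combination x0 * hchar2 - hC1'
    exact mul_right_cancel₀ hl1pne h2
  have hv1 : r * x0 + s * y0 = C3 * lam1 + (y0 - C3) * lam2 := by
    linear_combination -hC3' - y0 * hsum
  have E3 : p * (x0 - C1) + q * (y0 - C3) = lam2 * (x0 - C1) := by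
    linear_combination hu1 - E1
  have E4 : r * (x0 - C1) + s * (y0 - C3) = lam2 * (y0 - C3) := by
    linear_combination hv1 - E2
  have hclosed : ∀ k, u k = C1 * lam1 ^ k + (x0 - C1) * lam2 ^ k ∧
      v k = C3 * lam1 ^ k + (y0 - C3) * lam2 ^ k := by
    intro k
    induction k with
    | zero => constructor <;> [rw [hu0]; rw [hv0]] <;> ring
    | succ k ih =>
      obtain ⟨ihu, ihv⟩ := ih
      constructor
      · rw [hustep k, ihu, ihv]
        linear_combination lam1 ^ k * E1 + lam2 ^ k * E3
      · rw [hvstep k, ihu, ihv]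
        linear_combination lam1 ^ k * E2 + lam2 ^ k * E4
  have hpos : ∀ k, 0 < u k ∧ 0 < v k := by
    intro k
    induction k with
    | zero => exact ⟨hu0 ▸ hx0, hv0 ▸ hy0⟩
    | succ k ih =>
      exact ⟨by rw [hustep k]; exact add_pos (mul_pos hp ih.1) (mul_pos hq ih.2),
        by rw [hvstep k]; exact add_pos (mul_pos hr ih.1) (mul_pos hs ih.2)⟩
  have hrho : |lam2 / lam1| < 1 := by
    rw [abs_div, abs_of_pos hl1pos, div_lt_one hl1pos]
    rcases abs_cases lam2 with ⟨h, _⟩ | ⟨h, _⟩ <;> rw [h] <;> linarith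
  have htend := tendsto_pow_atTop_nhds_zero_of_abs_lt_one hrho
  have hfu : Tendsto (fun k => u k / lam1 ^ k) atTop (nhds C1) := by
    have heq : ∀ k, u k / lam1 ^ k = C1 + (x0 - C1) * (lam2 / lam1) ^ k := by
      intro k
      rw [(hclosed k).1, div_pow]
      have hlk : lam1 ^ k ≠ 0 := pow_ne_zero k hl1ne
      field_simp
    have h : Tendsto (fun k : ℕ => C1 + (x0 - C1) * (lam2 / lam1) ^ k) atTop
        (nhds (C1 + (x0 - C1) * 0)) := tendsto_const_nhds.add (htend.const_mul (x0 - C1))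
    simp only [mul_zero, add_zero] at h
    exact h.congr (fun k => (heq k).symm)
  have hfv : Tendsto (fun k => v k / lam1 ^ k) atTop (nhds C3) := by
    have heq : ∀ k, v k / lam1 ^ k = C3 + (y0 - C3) * (lam2 / lam1) ^ k := by
      intro k
      rw [(hclosed k).2, div_pow]
      have hlk : lam1 ^ k ≠ 0 := pow_ne_zero k hl1ne
      field_simp
    have h : Tendsto (fun k : ℕ => C3 + (y0 - C3) * (lam2 / lam1) ^ k) atTop
        (nhds (C3 + (y0 - C3) * 0)) := tendsto_const_nhds.add (htend.const_mul (y0 - C3))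
    simp only [mul_zero, add_zero] at h
    exact h.congr (fun k => (heq k).symm)
  have hC1ne : C1 ≠ 0 := hC1pos.ne'
  have hC3ne : C3 ≠ 0 := hC3pos.ne'
  have hgv : Tendsto (fun k => v (k - 1) / lam1 ^ (k - 1)) atTop (nhds C3) :=
    hfv.comp (tendsto_sub_atTop_nat 1)
  have hgu : Tendsto (fun k => u (k - 1) / lam1 ^ (k - 1)) atTop (nhds C1) :=
    hfu.comp (tendsto_sub_atTop_nat 1)
  refine ⟨?_, ?_, ?_, ?_⟩
  · have h := (hfu.div hgv hC3ne).const_mul lam1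
    rw [show lam1 * (C1 / C3) = C1 * lam1 / C3 by ring] at h
    refine h.congr' ?_
    filter_upwards [eventually_ge_atTop 1] with k hk
    obtain ⟨m, rfl⟩ : ∃ m, k = m + 1 := ⟨k - 1, by omega⟩
    simp only [Pi.div_apply, Nat.add_sub_cancel]
    have hvm : v m ≠ 0 := (hpos m).2.ne'
    have hlk : lam1 ^ m ≠ 0 := pow_ne_zero m hl1ne
    rw [pow_succ]
    field_simp
  · exact ((hfu.div hfv hC3ne).congr
      (fun k => aux_div_div (lam1 ^ k) (u k) (v k) (pow_ne_zero k hl1ne)))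
  · have h := (hfv.div hgu hC1ne).const_mul lam1
    rw [show lam1 * (C3 / C1) = C3 * lam1 / C1 by ring] at h
    refine h.congr' ?_
    filter_upwards [eventually_ge_atTop 1] with k hk
    obtain ⟨m, rfl⟩ : ∃ m, k = m + 1 := ⟨k - 1, by omega⟩
    simp only [Pi.div_apply, Nat.add_sub_cancel]
    have hum : u m ≠ 0 := (hpos m).1.ne'
    have hlk : lam1 ^ m ≠ 0 := pow_ne_zero m hl1ne
    rw [pow_succ]
    field_simp
  · exact ((hfv.div hfu hC1ne).congr
      (fun k => aux_div_div (lam1 ^ k) (v k) (u k) (pow_ne_zero k hl1ne)))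

theorem stmt_16
    (x y a b c d : ℕ → ℝ)
    (hx0 : 0 < x 0) (hy0 : 0 < y 0)
    (hapos : ∀ n, 0 < a n) (hbpos : ∀ n, 0 < b n)
    (hcpos : ∀ n, 0 < c n) (hdpos : ∀ n, 0 < d n)
    (haper : ∀ n, a (n + 2) = a n) (hbper : ∀ n, b (n + 2) = b n)
    (hcper : ∀ n, c (n + 2) = c n) (hdper : ∀ n, d (n + 2) = d n)
    (hxrec : ∀ n, x (n + 1) = a n / x n + b n / y n)
    (hyrec : ∀ n, y (n + 1) = c n / x n + d n / y n)
    (u v : ℕ → ℝ)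
    (hu : ∀ n, u n = (∏ k ∈ Finset.range (n + 1), x k) * ∏ k ∈ Finset.range n, y k)
    (hv : ∀ n, v n = (∏ k ∈ Finset.range n, x k) * ∏ k ∈ Finset.range (n + 1), y k)
    (A : Matrix (Fin 2) (Fin 2) ℝ)
    (hAdef : A = !![a 1 * d 0 + b 0 * b 1, a 0 * b 1 + a 1 * c 0;
                    b 0 * d 1 + c 1 * d 0, a 0 * d 1 + c 0 * c 1])
    (hA : IsUnit A)
    (D lam1 lam2 : ℝ)
    (hD : D = Real.sqrt ((a 1 * d 0 + b 0 * b 1 - a 0 * d 1 - c 0 * c 1) ^ 2 +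
      4 * (a 0 * b 1 + a 1 * c 0) * (b 0 * d 1 + c 1 * d 0)))
    (hlam1 : lam1 = (a 1 * d 0 + b 0 * b 1 + a 0 * d 1 + c 0 * c 1 + D) / 2)
    (hlam2 : lam2 = (a 1 * d 0 + b 0 * b 1 + a 0 * d 1 + c 0 * c 1 - D) / 2)
    (C1 C3 : ℝ)
    (hC1 : C1 = (a 0 * b 1 + a 1 * c 0) / (lam1 - lam2) *
      ((b 0 * d 1 + c 1 * d 0) / (lam1 - (a 1 * d 0 + b 0 * b 1)) * x 0 + y 0))
    (hC3 : C3 = ((b 0 * d 1 + c 1 * d 0) * x 0 + (lam1 - (a 1 * d 0 + b 0 * b 1)) * y 0) /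
      (lam1 - lam2))
    : Tendsto (fun k => u (2 * k) / v (2 * k - 2)) atTop (nhds (C1 * lam1 / C3)) ∧
      Tendsto (fun k => u (2 * k) / v (2 * k)) atTop (nhds (C1 / C3)) ∧
      Tendsto (fun k => v (2 * k) / u (2 * k - 2)) atTop (nhds (C3 * lam1 / C1)) ∧
      Tendsto (fun k => v (2 * k) / u (2 * k)) atTop (nhds (C3 / C1)) := by
  have hxy : ∀ n, 0 < x n ∧ 0 < y n := by
    intro n
    induction n with
    | zero => exact ⟨hx0, hy0⟩
    | succ n ih =>
      refine ⟨?_, ?_⟩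
      · rw [hxrec]; exact add_pos (div_pos (hapos n) ih.1) (div_pos (hbpos n) ih.2)
      · rw [hyrec]; exact add_pos (div_pos (hcpos n) ih.1) (div_pos (hdpos n) ih.2)
  have hurec : ∀ n, u (n + 1) = b n * u n + a n * v n := by
    intro n
    have hxn : x n ≠ 0 := (hxy n).1.ne'
    have hyn : y n ≠ 0 := (hxy n).2.ne'
    simp only [hu, hv, prod_range_succ]
    rw [hxrec]
    field_simp
    ring
  have hvrec : ∀ n, v (n + 1) = d n * u n + c n * v n := by
    intro n
    have hxn : x n ≠ 0 := (hxy n).1.ne'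
    have hyn : y n ≠ 0 := (hxy n).2.ne'
    simp only [hu, hv, prod_range_succ]
    rw [hyrec]
    field_simp
    ring
  have hper : ∀ f : ℕ → ℝ, (∀ n, f (n + 2) = f n) → ∀ k, f (2 * k) = f 0 ∧ f (2 * k + 1) = f 1 := by
    intro f hf k
    induction k with
    | zero => exact ⟨rfl, rfl⟩
    | succ k ih =>
      constructor
      · rw [show 2 * (k + 1) = 2 * k + 2 by ring, hf]; exact ih.1
      · rw [show 2 * (k + 1) + 1 = 2 * k + 1 + 2 by ring, hf]; exact ih.2
  have hustep2 : ∀ k, u (2 * (k + 1)) =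
      (a 1 * d 0 + b 0 * b 1) * u (2 * k) + (a 0 * b 1 + a 1 * c 0) * v (2 * k) := by
    intro k
    have e1 := hurec (2 * k)
    have e2 := hvrec (2 * k)
    have e3 := hurec (2 * k + 1)
    rw [show 2 * (k + 1) = 2 * k + 1 + 1 by ring, e3, e1, e2]
    simp only [(hper a haper k).1, (hper a haper k).2, (hper b hbper k).1, (hper b hbper k).2,
      (hper c hcper k).1, (hper c hcper k).2, (hper d hdper k).1, (hper d hdper k).2]
    ring
  have hvstep2 : ∀ k, v (2 * (k + 1)) =
      (b 0 * d 1 + c 1 * d 0) * u (2 * k) + (a 0 * d 1 + c 0 * c 1) * v (2 * k) := by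
    intro k
    have e1 := hurec (2 * k)
    have e2 := hvrec (2 * k)
    have e4 := hvrec (2 * k + 1)
    rw [show 2 * (k + 1) = 2 * k + 1 + 1 by ring, e4, e1, e2]
    simp only [(hper a haper k).1, (hper a haper k).2, (hper b hbper k).1, (hper b hbper k).2,
      (hper c hcper k).1, (hper c hcper k).2, (hper d hdper k).1, (hper d hdper k).2]
    ring
  have key := key_aux (a 1 * d 0 + b 0 * b 1) (a 0 * b 1 + a 1 * c 0)
      (b 0 * d 1 + c 1 * d 0) (a 0 * d 1 + c 0 * c 1) (x 0) (y 0) D lam1 lam2 C1 C3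
      (add_pos (mul_pos (hapos 1) (hdpos 0)) (mul_pos (hbpos 0) (hbpos 1)))
      (add_pos (mul_pos (hapos 0) (hbpos 1)) (mul_pos (hapos 1) (hcpos 0)))
      (add_pos (mul_pos (hbpos 0) (hdpos 1)) (mul_pos (hcpos 1) (hdpos 0)))
      (add_pos (mul_pos (hapos 0) (hdpos 1)) (mul_pos (hcpos 0) (hcpos 1)))
      hx0 hy0
      (by rw [hD]; congr 1; ring)
      (by rw [hlam1]; ring) (by rw [hlam2]; ring)
      hC1 hC3
      (fun k => u (2 * k)) (fun k => v (2 * k))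
      (by norm_num [hu]) (by norm_num [hv])
      hustep2 hvstep2
  obtain ⟨T1, T2, T3, T4⟩ := key
  refine ⟨?_, T2, ?_, T4⟩
  · refine T1.congr fun k => ?_
    show u (2 * k) / v (2 * (k - 1)) = u (2 * k) / v (2 * k - 2)
    rw [show 2 * (k - 1) = 2 * k - 2 from by omega]
  · refine T3.congr fun k => ?_
    show v (2 * k) / u (2 * (k - 1)) = v (2 * k) / u (2 * k - 2)
    rw [show 2 * (k - 1) = 2 * k - 2 from by omega]
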